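/- arXiv:2111.03169 — 2 statements merged into one kernel-verified Lean document; each statement's English description precedes it below -/
import Mathlib

section
/- The entropy-regularized optimal transport cost between a distribution and itself is strictly positive when the cost function is c(x,y) = (1/2)‖f(x) − f(y)‖² with f non-constant on the support of μ: min over couplings P of (μ,μ) of E_P[c] + ε·KL(P ‖ μ⊗μ) > 0 for any ε > 0. -/
open RealInnerProductSpace

/-- A coupling of `(μ, μ)` on a finite space. -/
def IsCoupling {X : Type*} [Fintype X] (μ : X → ℝ) (π : X × X → ℝ) : Prop :=
  (∀ p, 0 ≤ π p) ∧ (∀ x, ∑ y, π (x, y) = μ x) ∧ (∀ y, ∑ x, π (x, y) = μ y)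

/-- KL divergence between finite distributions. -/
noncomputable def klDiv {Y : Type*} [Fintype Y] (P Q : Y → ℝ) : ℝ :=
  ∑ y, if P y = 0 then 0 else P y * Real.log (P y / Q y)

/-- The entropy-regularized OT cost of transporting `f_*μ` to itself is strictly
positive whenever `f` is non-constant on the support of `μ`. -/
theorem stmt_10 {X : Type*} [Fintype X] {d : ℕ}
    (μ : X → ℝ) (hμ0 : ∀ x, 0 ≤ μ x) (hμ1 : ∑ x, μ x = 1)
    (f : X → EuclideanSpace ℝ (Fin d)) (hf : ∀ x, ‖f x‖ = 1)
    (x₁ x₂ : X) (hx₁ : 0 < μ x₁) (hx₂ : 0 < μ x₂) (hne : f x₁ ≠ f x₂)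
    (ε : ℝ) (hε : 0 < ε) :
    ∀ P : X × X → ℝ, IsCoupling μ P →
      0 < (∑ p : X × X, P p * ((1 / 2) * ‖f p.1 - f p.2‖ ^ 2)) +
        ε * klDiv P (fun p => μ p.1 * μ p.2) := by
  rintro P ⟨hP0, hPr, hPc⟩
  set Q : X × X → ℝ := fun p => μ p.1 * μ p.2 with hQdef
  set kt : X × X → ℝ := fun p => if P p = 0 then 0 else P p * Real.log (P p / Q p) with hkt
  set c : X × X → ℝ := fun p => (1 / 2) * ‖f p.1 - f p.2‖ ^ 2 with hc
  -- Q p = 0 implies P p = 0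
  have hPQ : ∀ p : X × X, Q p = 0 → P p = 0 := by
    intro p hq
    rcases mul_eq_zero.1 hq with h | h
    · have h1 : P (p.1, p.2) ≤ ∑ y, P (p.1, y) :=
        Finset.single_le_sum (fun y _ => hP0 _) (Finset.mem_univ p.2)
      rw [hPr p.1, h] at h1
      exact le_antisymm h1 (hP0 p)
    · have h1 : P (p.1, p.2) ≤ ∑ x, P (x, p.2) :=
        Finset.single_le_sum (f := fun x => P (x, p.2)) (fun x _ => hP0 _) (Finset.mem_univ p.1)
      rw [hPc p.2, h] at h1
      exact le_antisymm h1 (hP0 p)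
  have hQ0 : ∀ p, 0 ≤ Q p := fun p => mul_nonneg (hμ0 _) (hμ0 _)
  -- termwise lower bound for the KL part
  have hklterm : ∀ p : X × X, P p - Q p ≤ kt p := by
    intro p
    by_cases hz : P p = 0
    · simp [hkt, hz, hQ0 p]
    · have hp : 0 < P p := lt_of_le_of_ne (hP0 p) (Ne.symm hz)
      have hq : 0 < Q p := by
        rcases lt_or_eq_of_le (hQ0 p) with h | h
        · exact h
        · exact absurd (hPQ p h.symm) hz
      have h1 : Real.log (Q p / P p) ≤ Q p / P p - 1 :=
        Real.log_le_sub_one_of_pos (div_pos hq hp)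
      have h2 : Real.log (P p / Q p) = - Real.log (Q p / P p) := by
        rw [← Real.log_inv, inv_div]
      have h3 : Q p / P p * P p = Q p := div_mul_cancel₀ _ hp.ne'
      simp only [hkt, if_neg hz]
      nlinarith [mul_le_mul_of_nonneg_left h1 hp.le]
  have hcnn : ∀ p : X × X, 0 ≤ c p := fun p =>
    mul_nonneg (by norm_num) (sq_nonneg _)
  -- the termwise function
  set h : X × X → ℝ := fun p => P p * c p + ε * (kt p - P p + Q p) with hh
  have hhnn : ∀ p : X × X, 0 ≤ h p := by
    intro p
    have h1 := hklterm p
    have h2 := mul_nonneg (hP0 p) (hcnn p)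
    simp only [hh]
    nlinarith
  have hp0pos : 0 < h (x₁, x₂) := by
    have hcpos : 0 < c (x₁, x₂) := by
      have : f x₁ - f x₂ ≠ 0 := sub_ne_zero.mpr hne
      have hn : 0 < ‖f x₁ - f x₂‖ := norm_pos_iff.mpr this
      simp only [hc]
      positivity
    by_cases hz : P (x₁, x₂) = 0
    · have hqpos : 0 < Q (x₁, x₂) := mul_pos hx₁ hx₂
      have heq : h (x₁, x₂) = ε * Q (x₁, x₂) := by
        simp [hh, hkt, hz]
      rw [heq]
      exact mul_pos hε hqpos
    · have hp : 0 < P (x₁, x₂) := lt_of_le_of_ne (hP0 _) (Ne.symm hz)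
      have h1 : 0 < P (x₁, x₂) * c (x₁, x₂) := mul_pos hp hcpos
      have h2 := hklterm (x₁, x₂)
      simp only [hh]
      nlinarith
  have hsumpos : 0 < ∑ p : X × X, h p :=
    Finset.sum_pos' (fun p _ => hhnn p) ⟨(x₁, x₂), Finset.mem_univ _, hp0pos⟩
  -- sum identities
  have hsumP : ∑ p : X × X, P p = 1 := by
    rw [Fintype.sum_prod_type]
    simp only [hPr]
    exact hμ1
  have hsumQ : ∑ p : X × X, Q p = 1 := by
    rw [Fintype.sum_prod_type]
    simp only [hQdef, ← Finset.mul_sum, hμ1, mul_one]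
  have hsplit : ∑ p : X × X, h p =
      (∑ p : X × X, P p * c p) + ε * klDiv P Q := by
    have hkl : ∑ p : X × X, (kt p - P p + Q p) = klDiv P Q := by
      rw [Finset.sum_add_distrib, Finset.sum_sub_distrib, hsumP, hsumQ]
      simp [klDiv, hkt]
    simp only [hh]
    rw [Finset.sum_add_distrib, ← Finset.mul_sum, hkl]
  rw [hsplit] at hsumpos
  exact hsumpos
end

section
/- In the finite setting, the minimizer P* of E_P[c(x,y)] + ε·KL(P ‖ μ ⊗ μ) over all couplings P of (μ, μ) exists, is unique, and has the form P*(x,y) = exp((u(x) + v(y) − c(x,y))/ε)·μ(x)·μ(y) for some functions u, v : X → ℝ. -/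
/-- Entropy-regularized OT objective with cost `c`. -/
noncomputable def regCost {X : Type*} [Fintype X] (μ : X → ℝ) (c : X × X → ℝ)
    (ε : ℝ) (P : X × X → ℝ) : ℝ :=
  (∑ p : X × X, P p * c p) + ε * klDiv P (fun p => μ p.1 * μ p.2)

lemma klDiv_eq {Y : Type*} [Fintype Y] (P Q : Y → ℝ) :
    klDiv P Q = ∑ y, P y * Real.log (P y / Q y) := by
  unfold klDiv
  exact Finset.sum_congr rfl fun y _ => by by_cases h : P y = 0 <;> simp [h]

lemma mul_log_div_eq (x b : ℝ) (hb : b ≠ 0) :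
    x * Real.log (x / b) = x * Real.log x - x * Real.log b := by
  rcases eq_or_ne x 0 with h | h
  · simp [h]
  · rw [Real.log_div h hb]; ring

lemma cont_mul_log_div (b : ℝ) (hb : b ≠ 0) :
    Continuous fun x : ℝ => x * Real.log (x / b) := by
  have h : (fun x : ℝ => x * Real.log (x / b)) = fun x => b * (x / b * Real.log (x / b)) := by
    funext x
    have h2 : b * (x / b) = x := by field_simp
    rw [← mul_assoc, h2]
  rw [h]
  exact continuous_const.mul (Real.continuous_mul_log.comp (continuous_id.div_const b))

lemma conv_step {b : ℝ} (hb : 0 < b) {a t : ℝ} (ha : 0 ≤ a) (ht0 : 0 ≤ t) (ht1 : t ≤ 1) :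
    ((1 - t) * a + t * b) * Real.log (((1 - t) * a + t * b) / b)
      ≤ (1 - t) * (a * Real.log (a / b)) := by
  have hcv := Real.convexOn_mul_log.2 (Set.mem_Ici.mpr ha) (Set.mem_Ici.mpr hb.le)
    (by linarith : (0:ℝ) ≤ 1 - t) ht0 (by ring)
  simp only [smul_eq_mul] at hcv
  rw [mul_log_div_eq _ _ hb.ne', mul_log_div_eq _ _ hb.ne']
  nlinarith [hcv]

lemma gibbs_key {a b : ℝ} (ha : 0 ≤ a) (hb : 0 < b) :
    a - b ≤ a * Real.log (a / b) ∧ (a * Real.log (a / b) = a - b → a = b) := by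
  rcases eq_or_lt_of_le ha with h0 | h0
  · refine ⟨by simp [← h0]; linarith, fun h => ?_⟩
    simp [← h0] at h; linarith
  · have hba : 0 < b / a := div_pos hb h0
    have hlog : Real.log (a / b) = - Real.log (b / a) := by
      rw [← Real.log_inv]; congr 1; rw [inv_div]
    have hcancel : b / a * a = b := div_mul_cancel₀ b (ne_of_gt h0)
    constructor
    · have h1 := Real.log_le_sub_one_of_pos hba
      rw [hlog]
      nlinarith [mul_le_mul_of_nonneg_left h1 h0.le]
    · intro h
      by_contra hne
      have hba1 : b / a ≠ 1 := by
        intro h1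
        apply hne
        field_simp at h1
        linarith
      have h1 := Real.log_lt_sub_one_of_pos hba hba1
      rw [hlog] at h
      nlinarith [mul_lt_mul_of_pos_left h1 h0]
set_option maxHeartbeats 1000000 in
/-- Existence, uniqueness and Sinkhorn/Gibbs form of the entropic OT minimizer. -/
theorem stmt_11 {X : Type*} [Fintype X] [Nonempty X]
    (μ : X → ℝ) (hμ0 : ∀ x, 0 ≤ μ x) (hμ1 : ∑ x, μ x = 1) (hμpos : ∀ x, 0 < μ x)
    (c : X × X → ℝ) (ε : ℝ) (hε : 0 < ε) :
    ∃ Pstar : X × X → ℝ,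
      IsCoupling μ Pstar ∧
      (∀ P : X × X → ℝ, IsCoupling μ P → regCost μ c ε Pstar ≤ regCost μ c ε P) ∧
      (∀ Q : X × X → ℝ, IsCoupling μ Q →
        (∀ P : X × X → ℝ, IsCoupling μ P → regCost μ c ε Q ≤ regCost μ c ε P) →
        Q = Pstar) ∧
      ∃ u v : X → ℝ, ∀ x y : X,
        Pstar (x, y) = Real.exp ((u x + v y - c (x, y)) / ε) * μ x * μ y := by
  classical
  set q : X × X → ℝ := fun p => μ p.1 * μ p.2 with hq
  have hqpos : ∀ p, 0 < q p := fun p => mul_pos (hμpos p.1) (hμpos p.2)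
  have hreg : ∀ P : X × X → ℝ, regCost μ c ε P
      = ∑ p : X × X, (P p * c p + ε * (P p * Real.log (P p / q p))) := by
    intro P
    unfold regCost
    rw [klDiv_eq, Finset.mul_sum, ← Finset.sum_add_distrib]
  set S : Set ((X × X) → ℝ) := {P | IsCoupling μ P} with hS
  have hμle1 : ∀ x, μ x ≤ 1 := fun x =>
    hμ1 ▸ Finset.single_le_sum (fun i _ => hμ0 i) (Finset.mem_univ x)
  have hSsub : S ⊆ Set.Icc 0 1 := by
    rintro P ⟨h0, h1, h2⟩
    refine Set.mem_Icc.mpr ⟨fun p => h0 p, fun p => ?_⟩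
    calc P p ≤ ∑ y, P (p.1, y) :=
          Finset.single_le_sum (fun y _ => h0 (p.1, y)) (Finset.mem_univ p.2)
      _ = μ p.1 := h1 p.1
      _ ≤ 1 := hμle1 p.1
  have hSclosed : IsClosed S := by
    have hset : S = (⋂ p : X × X, {P : (X × X) → ℝ | 0 ≤ P p}) ∩
        ((⋂ x : X, {P : (X × X) → ℝ | ∑ y, P (x, y) = μ x}) ∩
         (⋂ y : X, {P : (X × X) → ℝ | ∑ x, P (x, y) = μ y})) := by
      ext P
      simp only [hS, Set.mem_setOf_eq, Set.mem_inter_iff, Set.mem_iInter, IsCoupling]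
    rw [hset]
    refine IsClosed.inter (isClosed_iInter fun p =>
      isClosed_le continuous_const (continuous_apply p)) (IsClosed.inter ?_ ?_)
    · exact isClosed_iInter fun x => isClosed_eq
        (continuous_finset_sum _ fun y _ => continuous_apply (x, y)) continuous_const
    · exact isClosed_iInter fun y => isClosed_eq
        (continuous_finset_sum _ fun x _ => continuous_apply (x, y)) continuous_const
  have hcont : Continuous (regCost μ c ε) := by
    have h : regCost μ c ε
        = fun P => ∑ p : X × X, (P p * c p + ε * (P p * Real.log (P p / q p))) :=
      funext hreg
    rw [h]
    refine continuous_finset_sum _ fun p _ => ?_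
    exact ((continuous_apply p).mul continuous_const).add
      (continuous_const.mul ((cont_mul_log_div (q p) (hqpos p).ne').comp (continuous_apply p)))
  have hqS : IsCoupling μ q := by
    refine ⟨fun p => (hqpos p).le, fun x => ?_, fun y => ?_⟩
    · simp only [hq]
      rw [← Finset.mul_sum, hμ1, mul_one]
    · simp only [hq]
      rw [← Finset.sum_mul, hμ1, one_mul]
  obtain ⟨Pstar, hPS, hmin⟩ :=
    (IsCompact.of_isClosed_subset isCompact_Icc hSclosed hSsub).exists_isMinOn
      ⟨q, hqS⟩ hcont.continuousOn
  have hPSc : IsCoupling μ Pstar := hPS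
  obtain ⟨hP0, hP1, hP2⟩ := hPSc
  have hPpos : ∀ p, 0 < Pstar p := by
    intro p0
    rcases lt_or_eq_of_le (hP0 p0) with hlt | heq
    · exact hlt
    exfalso
    set L : ℝ := ∑ p : X × X, (q p - Pstar p) * c p with hL
    set M : ℝ := ∑ p : X × X, |Pstar p * Real.log (Pstar p / q p)| with hM
    have hM0 : 0 ≤ M := Finset.sum_nonneg fun p _ => abs_nonneg _
    set t : ℝ := min (1/2) (Real.exp (-(|L| + ε * M + 1) / (ε * q p0))) with ht
    have ht0 : 0 < t := lt_min (by norm_num) (Real.exp_pos _)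
    have ht1 : t ≤ 1 := le_trans (min_le_left _ _) (by norm_num)
    have hεq0 : 0 < ε * q p0 := mul_pos hε (hqpos p0)
    have hlogt : ε * q p0 * Real.log t ≤ -(|L| + ε * M + 1) := by
      have h1 : Real.log t ≤ -(|L| + ε * M + 1) / (ε * q p0) := by
        calc Real.log t ≤ Real.log (Real.exp (-(|L| + ε * M + 1) / (ε * q p0))) :=
              Real.log_le_log ht0 (min_le_right _ _)
          _ = _ := Real.log_exp _
      calc ε * q p0 * Real.log t ≤ ε * q p0 * (-(|L| + ε * M + 1) / (ε * q p0)) :=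
            mul_le_mul_of_nonneg_left h1 hεq0.le
        _ = -(|L| + ε * M + 1) := by field_simp; rw [div_self (hqpos p0).ne']
    set Pt : X × X → ℝ := fun p => (1 - t) * Pstar p + t * q p with hPt
    have hPtS : IsCoupling μ Pt := by
      refine ⟨fun p => add_nonneg (mul_nonneg (by linarith) (hP0 p))
        (mul_nonneg ht0.le (hqpos p).le), fun x => ?_, fun y => ?_⟩
      · simp only [hPt]
        rw [Finset.sum_add_distrib, ← Finset.mul_sum, ← Finset.mul_sum, hP1 x, hqS.2.1 x]
        ring
      · simp only [hPt]
        rw [Finset.sum_add_distrib, ← Finset.mul_sum, ← Finset.mul_sum, hP2 y, hqS.2.2 y]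
        ring
    set diff : X × X → ℝ := fun p =>
      (Pt p * c p + ε * (Pt p * Real.log (Pt p / q p)))
        - (Pstar p * c p + ε * (Pstar p * Real.log (Pstar p / q p))) with hdiff
    have hterm : ∀ p : X × X, diff p
        ≤ t * ((q p - Pstar p) * c p) + ε * (t * |Pstar p * Real.log (Pstar p / q p)|) := by
      intro p
      have hcv := conv_step (hqpos p) (hP0 p) ht0.le ht1
      have h1 : Pt p * Real.log (Pt p / q p) - Pstar p * Real.log (Pstar p / q p)
          ≤ t * |Pstar p * Real.log (Pstar p / q p)| := by
        have h2 : t * (-(Pstar p * Real.log (Pstar p / q p)))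
            ≤ t * |Pstar p * Real.log (Pstar p / q p)| :=
          mul_le_mul_of_nonneg_left (neg_le_abs _) ht0.le
        simp only [hPt]
        nlinarith [hcv]
      have h2 : Pt p * c p - Pstar p * c p = t * ((q p - Pstar p) * c p) := by
        simp only [hPt]; ring
      simp only [hdiff]
      nlinarith [mul_le_mul_of_nonneg_left h1 hε.le]
    have hterm0 : diff p0 = t * ((q p0 - Pstar p0) * c p0) + ε * (q p0 * (t * Real.log t)) := by
      have hPt0 : Pt p0 = t * q p0 := by simp only [hPt, ← heq]; ring
      have hdv : t * q p0 / q p0 = t := by rw [mul_div_assoc, div_self (hqpos p0).ne', mul_one]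
      simp only [hdiff, hPt0, ← heq, hdv]
      ring
    have hsum : regCost μ c ε Pt - regCost μ c ε Pstar
        ≤ t * L + ε * (t * M) + ε * (q p0 * (t * Real.log t)) := by
      have htotal : regCost μ c ε Pt - regCost μ c ε Pstar = ∑ p : X × X, diff p := by
        rw [hreg Pt, hreg Pstar, ← Finset.sum_sub_distrib]
      have hsplit : ∑ p : X × X, diff p
          = ∑ p ∈ Finset.univ.erase p0, diff p + diff p0 :=
        (Finset.sum_erase_add _ _ (Finset.mem_univ p0)).symm
      have hA : ∑ p ∈ Finset.univ.erase p0, diff p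
          ≤ t * (∑ p ∈ Finset.univ.erase p0, (q p - Pstar p) * c p)
            + ε * t * (∑ p ∈ Finset.univ.erase p0, |Pstar p * Real.log (Pstar p / q p)|) := by
        calc ∑ p ∈ Finset.univ.erase p0, diff p
            ≤ ∑ p ∈ Finset.univ.erase p0, (t * ((q p - Pstar p) * c p)
              + ε * (t * |Pstar p * Real.log (Pstar p / q p)|)) :=
              Finset.sum_le_sum fun p _ => hterm p
          _ = _ := by
              rw [Finset.sum_add_distrib, ← Finset.mul_sum, ← Finset.mul_sum, ← Finset.mul_sum]
              ring
      have e2 : (∑ p ∈ Finset.univ.erase p0, (q p - Pstar p) * c p)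
          + (q p0 - Pstar p0) * c p0 = L :=
        Finset.sum_erase_add _ _ (Finset.mem_univ p0)
      have e3 : (∑ p ∈ Finset.univ.erase p0, |Pstar p * Real.log (Pstar p / q p)|) ≤ M :=
        Finset.sum_le_sum_of_subset_of_nonneg (Finset.subset_univ _)
          (fun p _ _ => abs_nonneg _)
      have e4 : ε * t * (∑ p ∈ Finset.univ.erase p0, |Pstar p * Real.log (Pstar p / q p)|)
          ≤ ε * t * M := mul_le_mul_of_nonneg_left e3 (by positivity)
      have e5 : t * (∑ p ∈ Finset.univ.erase p0, (q p - Pstar p) * c p)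
          = t * L - t * ((q p0 - Pstar p0) * c p0) := by
        rw [← e2]; ring
      rw [htotal, hsplit]
      rw [hterm0]
      nlinarith [hA, e4, e5]
    have hlt : regCost μ c ε Pt < regCost μ c ε Pstar := by
      have hneg : L + ε * M + ε * q p0 * Real.log t < 0 := by
        have := le_abs_self L
        linarith
      have hprod : t * (L + ε * M + ε * q p0 * Real.log t) < 0 :=
        mul_neg_of_pos_of_neg ht0 hneg
      nlinarith [hsum]
    exact absurd (isMinOn_iff.mp hmin Pt hPtS) (not_le.mpr hlt)
  set g : X × X → ℝ := fun p => c p + ε * Real.log (Pstar p / q p) with hg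
  have hesum : ∀ a : X, ∑ b, (if b = a then (1:ℝ) else 0) = 1 := by
    intro a; simp
  have hcycle : ∀ x1 x2 y1 y2 : X, g (x1, y1) + g (x2, y2) = g (x1, y2) + g (x2, y1) := by
    intro x1 x2 y1 y2
    set e : X → X → ℝ := fun a b => if b = a then 1 else 0 with he
    set D : X × X → ℝ := fun p => e x1 p.1 * e y1 p.2 + e x2 p.1 * e y2 p.2
      - e x1 p.1 * e y2 p.2 - e x2 p.1 * e y1 p.2 with hD
    have he01 : ∀ a b, 0 ≤ e a b ∧ e a b ≤ 1 := by
      intro a b; simp only [he]; split <;> norm_num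
    have hDbound : ∀ p : X × X, |D p| ≤ 4 := by
      intro p
      obtain ⟨h1a, h1b⟩ := he01 x1 p.1
      obtain ⟨h2a, h2b⟩ := he01 x2 p.1
      obtain ⟨h3a, h3b⟩ := he01 y1 p.2
      obtain ⟨h4a, h4b⟩ := he01 y2 p.2
      rw [abs_le]
      constructor <;> simp only [hD] <;> nlinarith
    have hDrow : ∀ x : X, ∑ y, D (x, y) = 0 := by
      intro x
      have : ∑ y, D (x, y) = e x1 x * (∑ y, e y1 y) + e x2 x * (∑ y, e y2 y)
          - e x1 x * (∑ y, e y2 y) - e x2 x * (∑ y, e y1 y) := by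
        simp only [hD, Finset.mul_sum]
        rw [Finset.sum_sub_distrib, Finset.sum_sub_distrib, Finset.sum_add_distrib]
      rw [this, he, hesum, hesum]
      ring
    have hDcol : ∀ y : X, ∑ x, D (x, y) = 0 := by
      intro y
      have : ∑ x, D (x, y) = (∑ x, e x1 x) * e y1 y + (∑ x, e x2 x) * e y2 y
          - (∑ x, e x1 x) * e y2 y - (∑ x, e x2 x) * e y1 y := by
        simp only [hD, Finset.sum_mul]
        rw [Finset.sum_sub_distrib, Finset.sum_sub_distrib, Finset.sum_add_distrib]
      rw [this, he, hesum, hesum]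
      ring
    have hpick : ∀ (f : X × X → ℝ) (a b : X),
        ∑ p : X × X, (e a p.1 * e b p.2) * f p = f (a, b) := by
      intro f a b
      rw [Fintype.sum_prod_type]
      simp [he, Finset.sum_ite_eq', ite_mul, mul_ite]
    obtain ⟨δ, hδ0, hδ⟩ : ∃ δ > 0, ∀ p, δ ≤ Pstar p := by
      obtain ⟨p', -, hp'⟩ := Finset.exists_min_image Finset.univ Pstar
        ⟨(Classical.arbitrary X, Classical.arbitrary X), Finset.mem_univ _⟩
      exact ⟨Pstar p', hPpos p', fun p => hp' p (Finset.mem_univ p)⟩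
    set h : ℝ → ℝ := fun s => regCost μ c ε (fun p => Pstar p + s * D p) with hh
    have hmem : ∀ s : ℝ, |s| < δ / 4 → IsCoupling μ (fun p => Pstar p + s * D p) := by
      intro s hs
      refine ⟨fun p => ?_, fun x => ?_, fun y => ?_⟩
      · show (0:ℝ) ≤ Pstar p + s * D p
        have h1 : |s * D p| ≤ |s| * 4 := by
          rw [abs_mul]
          exact mul_le_mul_of_nonneg_left (hDbound p) (abs_nonneg s)
        have h2 := neg_abs_le (s * D p)
        have h3 := hδ p
        have h4 := abs_nonneg s
        linarith
      · show ∑ b, (Pstar (x, b) + s * D (x, b)) = μ x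
        rw [Finset.sum_add_distrib, hP1 x, ← Finset.mul_sum, hDrow x, mul_zero, add_zero]
      · show ∑ a, (Pstar (a, y) + s * D (a, y)) = μ y
        rw [Finset.sum_add_distrib, hP2 y, ← Finset.mul_sum, hDcol y, mul_zero, add_zero]
    have hloc : IsLocalMin h 0 := by
      have hball := Metric.ball_mem_nhds (0:ℝ) (show (0:ℝ) < δ/4 by positivity)
      refine Filter.eventually_of_mem hball fun s hs => ?_
      have hs' : |s| < δ / 4 := by simpa [Real.dist_eq] using hs
      have h0' : (fun p : X × X => Pstar p + (0:ℝ) * D p) = Pstar := by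
        funext p; simp
      simp only [hh, h0']
      exact isMinOn_iff.mp hmin _ (hmem s hs')
    have hderiv : HasDerivAt h
        (∑ p : X × X, (D p * c p
          + ε * ((Real.log (Pstar p) + 1 - Real.log (q p)) * D p))) 0 := by
      have hfun : h = fun s => ∑ p : X × X,
          ((Pstar p + s * D p) * c p
            + ε * ((Pstar p + s * D p) * Real.log (Pstar p + s * D p)
              - (Pstar p + s * D p) * Real.log (q p))) := by
        funext s
        simp only [hh]
        rw [hreg]
        exact Finset.sum_congr rfl fun p _ => by
          rw [mul_log_div_eq _ _ (hqpos p).ne']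
      rw [hfun]
      apply HasDerivAt.fun_sum
      intro p _
      have hA : HasDerivAt (fun s : ℝ => Pstar p + s * D p) (D p) 0 := by
        simpa using ((hasDerivAt_id (0:ℝ)).mul_const (D p)).const_add (Pstar p)
      have e0 : Pstar p + 0 * D p = Pstar p := by ring
      have hG : HasDerivAt (fun x : ℝ => x * Real.log x - x * Real.log (q p))
          (Real.log (Pstar p) + 1 - Real.log (q p)) (Pstar p + 0 * D p) := by
        rw [e0]
        have hlin : HasDerivAt (fun x : ℝ => x * Real.log (q p)) (Real.log (q p)) (Pstar p) := by
          simpa using (hasDerivAt_id (Pstar p)).mul_const (Real.log (q p))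
        exact (Real.hasDerivAt_mul_log (hPpos p).ne').sub hlin
      have hcomp := hG.comp 0 hA
      exact (hA.mul_const (c p)).add (hcomp.const_mul ε)
    have hzero := hloc.hasDerivAt_eq_zero hderiv
    have hDsum : ∑ p : X × X, D p = 0 := by
      rw [Fintype.sum_prod_type]
      simp [hDrow]
    have hDg : ∑ p : X × X, D p * g p
        = g (x1, y1) + g (x2, y2) - g (x1, y2) - g (x2, y1) := by
      have : ∑ p : X × X, D p * g p
          = ∑ p : X × X, (e x1 p.1 * e y1 p.2) * g p
            + ∑ p : X × X, (e x2 p.1 * e y2 p.2) * g p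
            - ∑ p : X × X, (e x1 p.1 * e y2 p.2) * g p
            - ∑ p : X × X, (e x2 p.1 * e y1 p.2) * g p := by
        simp only [hD, sub_mul, add_mul]
        rw [Finset.sum_sub_distrib, Finset.sum_sub_distrib, Finset.sum_add_distrib]
      rw [this, hpick, hpick, hpick, hpick]
    have hrw : ∑ p : X × X, (D p * c p
          + ε * ((Real.log (Pstar p) + 1 - Real.log (q p)) * D p))
        = ∑ p : X × X, D p * g p + ε * ∑ p : X × X, D p := by
      rw [Finset.mul_sum, ← Finset.sum_add_distrib]
      refine Finset.sum_congr rfl fun p _ => ?_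
      simp only [hg]
      rw [Real.log_div (hPpos p).ne' (hqpos p).ne']
      ring
    rw [hrw, hDsum, mul_zero, add_zero, hDg] at hzero
    linarith
  set x0 : X := Classical.arbitrary X with hx0
  set u : X → ℝ := fun x => g (x, x0) with hu
  set v : X → ℝ := fun y => g (x0, y) - g (x0, x0) with hv
  have hguv : ∀ p : X × X, g p = u p.1 + v p.2 := by
    rintro ⟨x, y⟩
    have := hcycle x x0 y x0
    simp only [hu, hv]
    linarith
  have hform : ∀ x y : X, Pstar (x, y) = Real.exp ((u x + v y - c (x, y)) / ε) * μ x * μ y := by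
    intro x y
    have h1 : (u x + v y - c (x, y)) / ε = Real.log (Pstar (x, y) / q (x, y)) := by
      have h2 := hguv (x, y)
      simp only [hg] at h2
      rw [← h2]
      field_simp
      ring
    rw [h1, Real.exp_log (div_pos (hPpos (x, y)) (hqpos (x, y)))]
    have hqxy : q (x, y) = μ x * μ y := by simp [hq]
    rw [hqxy, div_mul_eq_mul_div, div_mul_eq_mul_div, mul_assoc, mul_div_assoc,
      div_self (mul_pos (hμpos x) (hμpos y)).ne', mul_one]
  have hklPs : klDiv Pstar Pstar = 0 := by
    rw [klDiv_eq]
    refine Finset.sum_eq_zero fun p _ => ?_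
    rw [div_self (hPpos p).ne', Real.log_one, mul_zero]
  have hident : ∀ P : X × X → ℝ, IsCoupling μ P → regCost μ c ε P
      = ε * klDiv P Pstar + ((∑ x, u x * μ x) + (∑ y, v y * μ y)) := by
    intro P hP
    obtain ⟨hP0', hP1', hP2'⟩ := hP
    have key : ∀ p : X × X, P p * c p + ε * (P p * Real.log (P p / q p))
        = ε * (P p * Real.log (P p / Pstar p)) + P p * (u p.1 + v p.2) := by
      intro p
      rcases eq_or_lt_of_le (hP0' p) with h | h
      · simp [← h]
      · have hlogsplit : Real.log (P p / q p)
            = Real.log (P p / Pstar p) + Real.log (Pstar p / q p) := by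
          rw [← Real.log_mul (div_pos h (hPpos p)).ne' (div_pos (hPpos p) (hqpos p)).ne']
          congr 1
          rw [div_mul_div_comm, mul_comm (P p) (Pstar p),
            mul_div_mul_left (P p) (q p) (hPpos p).ne']
        have h3 := hguv p
        simp only [hg] at h3
        rw [hlogsplit]
        linear_combination (P p) * h3
    have hPuv : ∑ p : X × X, P p * (u p.1 + v p.2)
        = (∑ x, u x * μ x) + (∑ y, v y * μ y) := by
      have h1 : ∑ p : X × X, P p * u p.1 = ∑ x, u x * μ x := by
        rw [Fintype.sum_prod_type]
        refine Finset.sum_congr rfl fun x _ => ?_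
        simp_rw [mul_comm (P (x, _)) (u x)]
        rw [← Finset.mul_sum, hP1' x, mul_comm]
      have h2 : ∑ p : X × X, P p * v p.2 = ∑ y, v y * μ y := by
        rw [Fintype.sum_prod_type_right]
        refine Finset.sum_congr rfl fun y _ => ?_
        simp_rw [mul_comm (P (_, y)) (v y)]
        rw [← Finset.mul_sum, hP2' y, mul_comm]
      simp_rw [mul_add]
      rw [Finset.sum_add_distrib, h1, h2]
    rw [hreg P, klDiv_eq, Finset.mul_sum]
    calc ∑ p : X × X, (P p * c p + ε * (P p * Real.log (P p / q p)))
        = ∑ p : X × X, (ε * (P p * Real.log (P p / Pstar p)) + P p * (u p.1 + v p.2)) :=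
          Finset.sum_congr rfl fun p _ => key p
      _ = (∑ p : X × X, ε * (P p * Real.log (P p / Pstar p)))
          + ∑ p : X × X, P p * (u p.1 + v p.2) := Finset.sum_add_distrib
      _ = _ := by rw [hPuv]
  have huniq : ∀ Q : X × X → ℝ, IsCoupling μ Q → klDiv Q Pstar = 0 → Q = Pstar := by
    intro Q hQ hKL
    obtain ⟨hQ0, hQ1, hQ2⟩ := hQ
    have hsum1 : ∑ p : X × X, Q p = 1 := by
      rw [Fintype.sum_prod_type]
      simp_rw [hQ1]
      exact hμ1
    have hsumP : ∑ p : X × X, Pstar p = 1 := by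
      rw [Fintype.sum_prod_type]
      simp_rw [hP1]
      exact hμ1
    have hzero : ∑ p : X × X, (Q p * Real.log (Q p / Pstar p) - (Q p - Pstar p)) = 0 := by
      rw [Finset.sum_sub_distrib, Finset.sum_sub_distrib, hsum1, hsumP, ← klDiv_eq, hKL]
      ring
    have hnn : ∀ p ∈ Finset.univ, (0:ℝ) ≤ Q p * Real.log (Q p / Pstar p) - (Q p - Pstar p) :=
      fun p _ => sub_nonneg.mpr (gibbs_key (hQ0 p) (hPpos p)).1
    have heach := (Finset.sum_eq_zero_iff_of_nonneg hnn).mp hzero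
    funext p
    have hp := heach p (Finset.mem_univ p)
    exact (gibbs_key (hQ0 p) (hPpos p)).2 (by linarith)
  refine ⟨Pstar, hPS, fun P hP => isMinOn_iff.mp hmin P hP, ?_, u, v, hform⟩
  intro Q hQ hQmin
  have e1 : regCost μ c ε Q = regCost μ c ε Pstar :=
    le_antisymm (hQmin Pstar hPS) (isMinOn_iff.mp hmin Q hQ)
  rw [hident Q hQ, hident Pstar hPS, hklPs] at e1
  have e2 : ε * klDiv Q Pstar = ε * 0 := by linarith
  exact huniq Q hQ (mul_left_cancel₀ hε.ne' e2)
end
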